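/- Let a, b, c > 0 be reals and κ ≥ 1 a real. If a ≤ b + c·(a^(1/(2κ)) + b^(1/(2κ))), then a^(1/(2κ)) ≤ (1 + (2κ-1)^(1/(2κ-1)))·(c/(2κ))^(1/(2κ-1)) + b^(1/(2κ)). -/

import Mathlib

open Real

/-- Superadditivity of `t ^ p` on nonnegative reals for `1 ≤ p`. -/
lemma my_rpow_superadd {x y p : ℝ} (hx : 0 ≤ x) (hy : 0 ≤ y) (hp : 1 ≤ p) :
    x ^ p + y ^ p ≤ (x + y) ^ p := by
  have := NNReal.add_rpow_le_rpow_add ⟨x, hx⟩ ⟨y, hy⟩ hp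
  have h2 := NNReal.coe_le_coe.mpr this
  push_cast [NNReal.coe_rpow] at h2
  exact h2

/-- Second-order Bernoulli: `(1+t)^p ≥ 1 + p t + t^p` for `t ≥ 0`, `p ≥ 2`. -/
lemma my_bernoulli2 {p : ℝ} (hp : 2 ≤ p) {t : ℝ} (ht : 0 ≤ t) :
    1 + p * t + t ^ p ≤ (1 + t) ^ p := by
  have hp1 : (1 : ℝ) ≤ p := le_trans one_le_two hp
  set g : ℝ → ℝ := fun s => (1 + s) ^ p - (1 + p * s + s ^ p) with hg
  have key : MonotoneOn g (Set.Ici 0) := by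
    have hderiv : ∀ s : ℝ, 0 < s →
        HasDerivAt g (p * (1 + s) ^ (p - 1) - (p + p * s ^ (p - 1))) s := by
      intro s hs
      have h1 : HasDerivAt (fun s : ℝ => (1 + s) ^ p)
          (p * (1 + s) ^ (p - 1) * 1) s := by
        have hb : HasDerivAt (fun s : ℝ => 1 + s) 1 s := by
          simpa using (hasDerivAt_id s).const_add 1
        exact (Real.hasDerivAt_rpow_const
          (Or.inl (by positivity : (0:ℝ) < 1 + s).ne')).comp s hb
      have h2 : HasDerivAt (fun s : ℝ => 1 + p * s + s ^ p)
          (0 + p * 1 + p * s ^ (p - 1)) s := by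
        exact (((hasDerivAt_const s 1).add
          ((hasDerivAt_id s).const_mul p)).add
          (Real.hasDerivAt_rpow_const (Or.inl hs.ne')))
      have := h1.sub h2
      exact this.congr_deriv (by ring)
    apply monotoneOn_of_deriv_nonneg (convex_Ici 0)
    · have c1 : ContinuousOn (fun s : ℝ => (1 + s) ^ p) (Set.Ici 0) := by
        apply ContinuousOn.rpow_const (continuous_const.add continuous_id).continuousOn
        intro s hs
        have : (0:ℝ) ≤ s := hs
        exact Or.inl (by show (1:ℝ) + s ≠ 0; positivity)
      have c2 : ContinuousOn (fun s : ℝ => s ^ p) (Set.Ici 0) :=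
        continuousOn_id.rpow_const (fun s _ => Or.inr (by linarith))
      exact c1.sub ((continuousOn_const.add (continuousOn_const.mul continuousOn_id)).add c2)
    · intro s hs
      rw [interior_Ici] at hs
      exact (hderiv s hs).differentiableAt.differentiableWithinAt
    · intro s hs
      rw [interior_Ici] at hs
      rw [(hderiv s hs).deriv]
      have hsup : 1 + s ^ (p - 1) ≤ (1 + s) ^ (p - 1) := by
        have h1 := my_rpow_superadd zero_le_one hs.le (by linarith : (1:ℝ) ≤ p - 1)
        rwa [Real.one_rpow] at h1
      nlinarith
  have h0 : g 0 ≤ g t := key Set.self_mem_Ici ht ht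
  simp only [hg] at h0
  norm_num [Real.zero_rpow (show p ≠ 0 by linarith), Real.one_rpow] at h0
  linarith

lemma my_main_aux (p c x y : ℝ) (hp2 : 2 ≤ p) (hc : 0 < c)
    (hx0 : 0 < x) (hy0 : 0 < y) (h : x ^ p ≤ y ^ p + c * (x + y)) :
    x ≤ (1 + (p - 1) ^ (1 / (p - 1))) * (c / p) ^ (1 / (p - 1)) + y := by
  have hp0 : 0 < p := by linarith
  have hq : 1 ≤ p - 1 := by linarith
  have hq0 : 0 < p - 1 := by linarith
  have hβ1 : 1 ≤ (p - 1) ^ (1 / (p - 1)) := Real.one_le_rpow hq (by positivity)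
  generalize hβg : (p - 1) ^ (1 / (p - 1)) = β at hβ1 ⊢
  generalize hKg : (1 + β) * (c / p) ^ (1 / (p - 1)) = K
  have hK0 : 0 < K := by
    rw [← hKg]
    have : 0 < (c / p) ^ (1 / (p - 1)) := Real.rpow_pos_of_pos (by positivity) _
    positivity
  have hKq : K ^ (p - 1) = (1 + β) ^ (p - 1) * (c / p) := by
    rw [← hKg, Real.mul_rpow (by linarith) (Real.rpow_nonneg (by positivity) _),
      ← Real.rpow_mul (by positivity : (0:ℝ) ≤ c / p), one_div_mul_cancel hq0.ne',
      Real.rpow_one]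
  have hBern : p ≤ (1 + β) ^ (p - 1) := by
    have h1 := one_add_mul_self_le_rpow_one_add (by linarith : (-1:ℝ) ≤ β) hq
    nlinarith
  have hKc : c ≤ K ^ (p - 1) := by
    rw [hKq]
    have h1 : p * (c / p) ≤ (1 + β) ^ (p - 1) * (c / p) :=
      mul_le_mul_of_nonneg_right hBern (by positivity)
    have h2 : p * (c / p) = c := by field_simp
    linarith
  have hK2c : 2 * c ≤ p * K ^ (p - 1) := by
    rw [hKq]
    have h1 : p * (c / p) ≤ (1 + β) ^ (p - 1) * (c / p) :=
      mul_le_mul_of_nonneg_right hBern (by positivity)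
    have h2 : p * (c / p) = c := by field_simp
    nlinarith
  by_contra hcon
  push_neg at hcon
  obtain ⟨u, hug⟩ : ∃ u, x - y = u := ⟨x - y, rfl⟩
  have huK : K < u := by linarith
  have hu0 : 0 < u := lt_trans hK0 huK
  have hxuy : x = u + y := by linarith
  -- key inequality: x^p ≥ u^p + y^p + p u^(p-1) y
  have hb2 := my_bernoulli2 hp2 (by positivity : (0:ℝ) ≤ y / u)
  have hmul := mul_le_mul_of_nonneg_left hb2 (Real.rpow_nonneg hu0.le p)
  have e1 : u ^ p * (1 + y / u) ^ p = x ^ p := by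
    rw [← Real.mul_rpow hu0.le (by positivity)]
    congr 1
    field_simp [hxuy]
    linarith
  have e2 : u ^ p * (y / u) ^ p = y ^ p := by
    rw [← Real.mul_rpow hu0.le (by positivity)]
    congr 1
    field_simp
  have hsplit : u ^ p = u ^ (p - 1) * u := by
    rw [← Real.rpow_add_one hu0.ne' (p - 1)]
    norm_num
  have e3 : u ^ p * (p * (y / u)) = p * u ^ (p - 1) * y := by
    rw [hsplit]
    field_simp
  have expand : u ^ p * (1 + p * (y / u) + (y / u) ^ p)
      = u ^ p + p * u ^ (p - 1) * y + y ^ p := by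
    rw [mul_add, mul_add, mul_one, e2, e3]
  have key : u ^ p + p * u ^ (p - 1) * y + y ^ p ≤ x ^ p := by
    rw [← expand, ← e1]; exact hmul
  have hup : K ^ (p - 1) < u ^ (p - 1) := Real.rpow_lt_rpow hK0.le huK hq0
  have h1 : c * u < u ^ p := by
    rw [hsplit]
    nlinarith
  have h2 : 2 * c * y ≤ p * u ^ (p - 1) * y := by
    have h3 : p * K ^ (p - 1) ≤ p * u ^ (p - 1) :=
      mul_le_mul_of_nonneg_left hup.le hp0.le
    have h4 : 2 * c ≤ p * u ^ (p - 1) := le_trans hK2c h3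
    nlinarith
  have hxy : c * (x + y) = c * u + 2 * c * y := by rw [hxuy]; ring
  linarith

theorem stmt_2 (a b c κ : ℝ) (ha : 0 < a) (hb : 0 < b) (hc : 0 < c) (hκ : 1 ≤ κ)
    (h : a ≤ b + c * (a ^ (1 / (2 * κ)) + b ^ (1 / (2 * κ)))) :
    a ^ (1 / (2 * κ)) ≤
      (1 + (2 * κ - 1) ^ (1 / (2 * κ - 1))) * (c / (2 * κ)) ^ (1 / (2 * κ - 1))
        + b ^ (1 / (2 * κ)) := by
  have hp0 : (0:ℝ) < 2 * κ := by linarith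
  have hxa : (a ^ (1 / (2 * κ))) ^ (2 * κ) = a := by
    rw [← Real.rpow_mul ha.le, one_div_mul_cancel hp0.ne', Real.rpow_one]
  have hyb : (b ^ (1 / (2 * κ))) ^ (2 * κ) = b := by
    rw [← Real.rpow_mul hb.le, one_div_mul_cancel hp0.ne', Real.rpow_one]
  exact my_main_aux (2 * κ) c (a ^ (1 / (2 * κ))) (b ^ (1 / (2 * κ)))
    (by linarith) hc (Real.rpow_pos_of_pos ha _) (Real.rpow_pos_of_pos hb _)
    (by rw [hxa, hyb]; linarith)
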